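/- Let R be a commutative ring and n ∈ ℕ. Then the Krull dimension of R is less than n if and only if for all a₁,...,aₙ ∈ R there exist natural numbers m₁,...,mₙ such that the product a₁^{m₁}···aₙ^{mₙ} lies in the ideal of R generated by the elements a_j · a₁^{m₁}···a_j^{m_j} for j = 1,...,n. -/

import Mathlib

open Order

section Helpers

lemma CL.Iic_last (n : ℕ) : Finset.Iic (Fin.last n) = Finset.univ := by
  ext i; simp [Fin.le_last]

lemma CL.Iic_castSucc {n : ℕ} (j : Fin n) :
    Finset.Iic (Fin.castSucc j) = (Finset.Iic j).map Fin.castSuccOrderEmb.toEmbedding := by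
  ext k
  simp only [Finset.mem_Iic, Finset.mem_map, RelEmbedding.coe_toEmbedding]
  constructor
  · intro hk
    have hk' : k.1 ≤ j.1 := hk
    refine ⟨⟨k.1, by omega⟩, ?_, ?_⟩
    · exact hk'
    · rfl
  · rintro ⟨i, hi, rfl⟩
    exact Fin.castSucc_le_castSucc_iff.mpr hi

lemma CL.prod_Iic_castSucc {M : Type*} [CommMonoid M] {n : ℕ} (f : Fin (n+1) → M) (j : Fin n) :
    ∏ i ∈ Finset.Iic (Fin.castSucc j), f i = ∏ i ∈ Finset.Iic j, f (Fin.castSucc i) := by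
  rw [CL.Iic_castSucc, Finset.prod_map]
  rfl

lemma CL.range_snoc {α : Type*} {n : ℕ} (f : Fin n → α) (a : α) :
    Set.range (Fin.snoc f a : Fin (n+1) → α) = insert a (Set.range f) := by
  ext x
  constructor
  · rintro ⟨i, rfl⟩
    refine Fin.lastCases ?_ ?_ i
    · left; simp
    · intro i; right; exact ⟨i, by simp⟩
  · rintro (rfl | ⟨i, rfl⟩)
    · exact ⟨Fin.last n, by simp⟩
    · exact ⟨Fin.castSucc i, by simp⟩

lemma CL.krullDim_lt_nat_iff {α : Type*} [Preorder α] {n : ℕ} :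
    krullDim α < n ↔ ∀ p : LTSeries α, p.length ≠ n := by
  constructor
  · intro h p hp
    exact absurd (hp ▸ Order.LTSeries.length_le_krullDim p) (not_le_of_gt h)
  · intro h
    cases n with
    | zero =>
      have : IsEmpty α := by
        by_contra hne
        rw [not_isEmpty_iff] at hne
        exact h (RelSeries.singleton _ hne.some) rfl
      rw [krullDim_eq_bot]
      exact WithBot.bot_lt_coe _
    | succ n =>
      have hlen : ∀ p : LTSeries α, (p.length : WithBot ℕ∞) ≤ (n : ℕ) := by
        intro p
        have hpl : p.length ≤ n := by
          by_contra hc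
          push_neg at hc
          exact h (p.take ⟨n + 1, by omega⟩) rfl
        exact_mod_cast hpl
      have : krullDim α ≤ (n : ℕ) := iSup_le hlen
      refine lt_of_le_of_lt this ?_
      exact_mod_cast Nat.lt_succ_self n

end Helpers

section Boundary

variable {R : Type*} [CommRing R]

/-- The boundary monoid `a^ℕ (1 + aR)` of an element. -/
def CLbd (a : R) : Submonoid R where
  carrier := {y | ∃ k : ℕ, ∃ x : R, a ^ k * (1 + a * x) = y}
  one_mem' := ⟨0, 0, by ring⟩
  mul_mem' := by
    rintro _ _ ⟨k, x, rfl⟩ ⟨l, y, rfl⟩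
    exact ⟨k + l, x + y + a * x * y, by ring⟩

lemma CLbd.self_mem (a : R) : a ∈ CLbd a := ⟨1, 0, by ring⟩

/-- Key lemma: `dim R < n + 1` iff the localization at every boundary monoid
has dimension `< n`. -/
lemma CL.dim_lt_succ_iff (n : ℕ) :
    ringKrullDim R < (n + 1 : ℕ) ↔
      ∀ a : R, ringKrullDim (Localization (CLbd a)) < n := by
  rw [ringKrullDim, CL.krullDim_lt_nat_iff]
  conv_rhs => ext a; rw [ringKrullDim, CL.krullDim_lt_nat_iff]
  rw [← not_iff_not]
  push_neg
  constructor
  · -- a chain of length n+1 in R gives a boundary localization with a chain of length n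
    rintro ⟨p, hp⟩
    -- the two top primes
    have hstep : p ⟨n, by omega⟩ < p ⟨n + 1, by omega⟩ := by
      have := p.step ⟨n, by omega⟩
      convert this using 2 <;> simp [Fin.succ]
    obtain ⟨a, ha1, ha2⟩ := SetLike.exists_of_lt
      ((PrimeSpectrum.asIdeal_lt_asIdeal _ _).mpr hstep)
    refine ⟨a, ?_⟩
    set L := Localization (CLbd a)
    have hdisj : ∀ i : Fin (n + 1),
        Disjoint (CLbd a : Set R) ((p ⟨i.1, by omega⟩).asIdeal : Set R) := by
      intro i
      rw [Set.disjoint_left]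
      rintro _ ⟨k, x, rfl⟩ hmem
      have hle : p ⟨i.1, by omega⟩ ≤ p ⟨n, by omega⟩ :=
        p.strictMono.monotone (by simpa using i.is_le)
      have hmem' : a ^ k * (1 + a * x) ∈ (p ⟨n, by omega⟩).asIdeal := hle hmem
      rcases (p ⟨n, by omega⟩).isPrime.mem_or_mem hmem' with h1 | h2
      · exact ha2 ((p ⟨n, by omega⟩).isPrime.mem_of_pow_mem _ h1)
      · have h3 : (1 + a * x) ∈ (p ⟨n + 1, by omega⟩).asIdeal := hstep.le h2
        have h4 : (1 : R) ∈ (p ⟨n + 1, by omega⟩).asIdeal := by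
          have := Ideal.sub_mem _ h3 (Ideal.mul_mem_right x _ ha1)
          simpa using this
        exact (p ⟨n + 1, by omega⟩).isPrime.ne_top (Ideal.eq_top_iff_one _ |>.mpr h4)
    let e := (IsLocalization.orderIsoOfPrime (CLbd a) L).symm
    refine ⟨⟨n, fun i => ⟨(e ⟨(p ⟨i.1, by omega⟩).asIdeal,
      (p ⟨i.1, by omega⟩).isPrime, hdisj i⟩).1, (e _).2⟩, ?_⟩, rfl⟩
    intro i; show (_ : PrimeSpectrum L) < _
    rw [← PrimeSpectrum.asIdeal_lt_asIdeal]
    have : (⟨(p ⟨i.1, by omega⟩).asIdeal, (p ⟨i.1, by omega⟩).isPrime, hdisj ⟨i.1, by omega⟩⟩ :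
        {q : Ideal R // q.IsPrime ∧ Disjoint (CLbd a : Set R) ↑q}) <
        ⟨(p ⟨i.1 + 1, by omega⟩).asIdeal, (p ⟨i.1 + 1, by omega⟩).isPrime, hdisj ⟨i.1 + 1, by omega⟩⟩ := by
      rw [Subtype.mk_lt_mk, PrimeSpectrum.asIdeal_lt_asIdeal]
      exact p.strictMono (by simp [Fin.lt_def])
    exact e.strictMono this
  · -- a chain of length n in a boundary localization gives a chain of length n+1 in R
    rintro ⟨a, q, hq⟩
    set L := Localization (CLbd a)
    let e := IsLocalization.orderIsoOfPrime (CLbd a) L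
    -- pull the chain back to R
    let p : LTSeries (PrimeSpectrum R) :=
      ⟨q.length, fun i => ⟨(e ⟨(q i).asIdeal, (q i).isPrime⟩).1,
        (e ⟨(q i).asIdeal, (q i).isPrime⟩).2.1⟩, by
        intro i; show (_ : PrimeSpectrum R) < _
        rw [← PrimeSpectrum.asIdeal_lt_asIdeal]
        refine e.strictMono ?_
        rw [Subtype.mk_lt_mk, PrimeSpectrum.asIdeal_lt_asIdeal]
        exact q.strictMono (Fin.castSucc_lt_succ (i := i))⟩
    have hdisj : Disjoint (CLbd a : Set R) (p.last.asIdeal : Set R) :=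
      (e ⟨(q (Fin.last _)).asIdeal, (q (Fin.last _)).isPrime⟩).2.2
    -- extend at the top by a prime above `p.last + (a)`
    have hne : p.last.asIdeal ⊔ Ideal.span {a} ≠ ⊤ := by
      intro htop
      have hone : (1 : R) ∈ p.last.asIdeal ⊔ Ideal.span {a} := htop ▸ Submodule.mem_top
      obtain ⟨y, hy, z, hz, hyz⟩ := Submodule.mem_sup.mp hone
      obtain ⟨x, rfl⟩ := Ideal.mem_span_singleton'.mp hz
      have : (1 : R) + a * (-x) ∈ p.last.asIdeal := by
        have : y = 1 + a * (-x) := by rw [← hyz]; ring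
        rwa [← this]
      exact Set.disjoint_left.mp hdisj ⟨0, -x, by ring⟩ this
    obtain ⟨M, hM, hMle⟩ := Ideal.exists_le_maximal _ hne
    have haM : a ∈ M := hMle (Submodule.mem_sup_right (Ideal.mem_span_singleton_self a))
    have hlt : p.last < (⟨M, hM.isPrime⟩ : PrimeSpectrum R) := by
      rw [← PrimeSpectrum.asIdeal_lt_asIdeal]
      refine lt_of_le_of_ne (le_sup_left.trans hMle) ?_
      intro heq
      exact Set.disjoint_left.mp hdisj (CLbd.self_mem a) (heq ▸ haM)
    refine ⟨p.snoc ⟨M, hM.isPrime⟩ hlt, ?_⟩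
    simp [RelSeries.snoc, RelSeries.append, p, hq]

end Boundary

section Algebra

variable {R : Type*} [CommRing R]

lemma CL.algebraMap_mem_map_iff (M : Submonoid R) (I : Ideal R) (x : R) :
    algebraMap R (Localization M) x ∈ I.map (algebraMap R (Localization M)) ↔
      ∃ s ∈ M, s * x ∈ I := by
  rw [show algebraMap R (Localization M) x = IsLocalization.mk' (Localization M) x (1 : M) from
    (IsLocalization.mk'_one _ x).symm, IsLocalization.mk'_mem_map_algebraMap_iff M]

lemma CL.span_range_unit_mul {n : ℕ} (g : Fin n → R) (u : Fin n → Rˣ) :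
    Ideal.span (Set.range fun j => (u j : R) * g j) = Ideal.span (Set.range g) := by
  apply le_antisymm <;> rw [Ideal.span_le] <;> rintro _ ⟨j, rfl⟩
  · exact Ideal.mul_mem_left _ _ (Ideal.subset_span ⟨j, rfl⟩)
  · have h1 : ((u j : R) * g j) ∈ Ideal.span (Set.range fun j => (u j : R) * g j) :=
      Ideal.subset_span ⟨j, rfl⟩
    have := Ideal.mul_mem_left _ (((u j)⁻¹ : Rˣ) : R) h1
    simpa [← mul_assoc] using this

lemma CL.val_prod {ι : Type*} (s : Finset ι) (f : ι → Rˣ) :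
    ((∏ i ∈ s, f i : Rˣ) : R) = ∏ i ∈ s, (f i : R) :=
  map_prod (Units.coeHom R) f s

/-- The Coquand–Lombardi condition in degree `n`. -/
def CLcond (R : Type*) [CommRing R] (n : ℕ) : Prop :=
  ∀ a : Fin n → R, ∃ m : Fin n → ℕ,
    (∏ i, a i ^ m i) ∈
      Ideal.span (Set.range fun j : Fin n => a j * ∏ i ∈ Finset.Iic j, a i ^ m i)

/-- The CL-condition for a fixed tuple is invariant under multiplying the tuple by units. -/
lemma CL.unit_mul {n : ℕ} (a : Fin n → R) (u : Fin n → Rˣ)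
    (h : ∃ m : Fin n → ℕ, (∏ i, a i ^ m i) ∈
      Ideal.span (Set.range fun j : Fin n => a j * ∏ i ∈ Finset.Iic j, a i ^ m i)) :
    ∃ m : Fin n → ℕ, (∏ i, ((u i : R) * a i) ^ m i) ∈
      Ideal.span (Set.range fun j : Fin n =>
        ((u j : R) * a j) * ∏ i ∈ Finset.Iic j, ((u i : R) * a i) ^ m i) := by
  obtain ⟨m, hm⟩ := h
  refine ⟨m, ?_⟩
  have hgen : (fun j : Fin n => ((u j : R) * a j) * ∏ i ∈ Finset.Iic j, ((u i : R) * a i) ^ m i)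
      = fun j : Fin n => ((u j * ∏ i ∈ Finset.Iic j, u i ^ m i : Rˣ) : R) *
        (a j * ∏ i ∈ Finset.Iic j, a i ^ m i) := by
    funext j
    simp only [Units.val_mul, CL.val_prod, Units.val_pow_eq_pow_val, mul_pow,
      Finset.prod_mul_distrib]
    ring
  rw [hgen, CL.span_range_unit_mul]
  have hprod : (∏ i, ((u i : R) * a i) ^ m i)
      = ((∏ i, u i ^ m i : Rˣ) : R) * ∏ i, a i ^ m i := by
    simp only [Units.val_mul, CL.val_prod, Units.val_pow_eq_pow_val, mul_pow,
      Finset.prod_mul_distrib]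
  rw [hprod]
  exact Ideal.mul_mem_left _ _ hm

end Algebra

section Main

universe u

lemma CL.main (n : ℕ) : ∀ (R : Type u) [CommRing R], ringKrullDim R < n ↔ CLcond R n := by
  induction n with
  | zero =>
    intro R _
    constructor
    · intro h a
      have hsub : Subsingleton R := by
        by_contra hns
        rw [not_subsingleton_iff_nontrivial] at hns
        haveI := hns
        have := lt_of_le_of_lt (ringKrullDim_nonneg_of_nontrivial (R := R)) h
        simp at this
      exact ⟨fun _ => 0, by rw [Subsingleton.elim ((∏ i, a i ^ (0:ℕ))) 0]; exact Ideal.zero_mem _⟩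
    · intro h
      obtain ⟨m, hm⟩ := h (fun _ => 0)
      simp only [Finset.univ_eq_empty, Finset.prod_empty, Set.range_eq_empty,
        Ideal.span_empty, Ideal.mem_bot] at hm
      have : Subsingleton R := subsingleton_of_zero_eq_one hm.symm
      rw [ringKrullDim_eq_bot_of_subsingleton]
      exact WithBot.bot_lt_coe _
  | succ n ih =>
    intro R _
    rw [CL.dim_lt_succ_iff]
    constructor
    · intro h a
      set b := a (Fin.last n) with hb
      set L := Localization (CLbd b) with hL
      obtain ⟨m, hm⟩ := (ih L).mp (h b) (fun i => algebraMap R L (a (Fin.castSucc i)))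
      set g : Fin n → R :=
        fun j => a (Fin.castSucc j) * ∏ i ∈ Finset.Iic j, a (Fin.castSucc i) ^ m i with hg
      have hm' : algebraMap R L (∏ i, a (Fin.castSucc i) ^ m i) ∈
          (Ideal.span (Set.range g)).map (algebraMap R L) := by
        rw [Ideal.map_span, ← Set.range_comp]
        have e1 : (algebraMap R L) (∏ i, a (Fin.castSucc i) ^ m i)
            = ∏ i : Fin n, (algebraMap R L) (a (Fin.castSucc i)) ^ m i := by
          rw [map_prod]; simp [map_pow]
        have e2 : ⇑(algebraMap R L) ∘ g = fun j => (algebraMap R L) (a (Fin.castSucc j)) *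
            ∏ i ∈ Finset.Iic j, (algebraMap R L) (a (Fin.castSucc i)) ^ m i := by
          funext j; simp [hg, Function.comp_def, map_mul, map_prod, map_pow]
        rw [e1, e2]
        exact hm
      rw [CL.algebraMap_mem_map_iff] at hm'
      obtain ⟨s, ⟨k, x, rfl⟩, hs⟩ := hm'
      refine ⟨Fin.snoc m k, ?_⟩
      set G : Fin (n+1) → R :=
        fun j => a j * ∏ i ∈ Finset.Iic j, a i ^ (Fin.snoc m k : Fin (n+1) → ℕ) i with hG
      have hGC : ∀ j : Fin n, G (Fin.castSucc j) = g j := by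
        intro j
        simp only [hG, hg, CL.prod_Iic_castSucc]
        congr 1
        refine Finset.prod_congr rfl fun i _ => ?_
        rw [Fin.snoc_castSucc]
      have hX : (∏ i : Fin (n+1), a i ^ (Fin.snoc m k : Fin (n+1) → ℕ) i)
          = (∏ i : Fin n, a (Fin.castSucc i) ^ m i) * b ^ k := by
        rw [Fin.prod_univ_castSucc]
        simp [Fin.snoc_castSucc, Fin.snoc_last, hb]
      have hGlast : G (Fin.last n) = b * ((∏ i : Fin n, a (Fin.castSucc i) ^ m i) * b ^ k) := by
        simp only [hG, CL.Iic_last]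
        rw [show (∏ i ∈ Finset.univ, a i ^ (Fin.snoc m k : Fin (n+1) → ℕ) i)
          = (∏ i : Fin n, a (Fin.castSucc i) ^ m i) * b ^ k from hX, ← hb]
      have h1 : (b ^ k * (1 + b * x)) * (∏ i : Fin n, a (Fin.castSucc i) ^ m i)
          ∈ Ideal.span (Set.range G) := by
        refine Ideal.span_mono ?_ hs
        rintro _ ⟨j, rfl⟩
        exact ⟨Fin.castSucc j, hGC j⟩
      have h2 : G (Fin.last n) ∈ Ideal.span (Set.range G) := Ideal.subset_span ⟨_, rfl⟩
      have key : (∏ i : Fin (n+1), a i ^ (Fin.snoc m k : Fin (n+1) → ℕ) i)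
          = (b ^ k * (1 + b * x)) * (∏ i : Fin n, a (Fin.castSucc i) ^ m i)
            - x * G (Fin.last n) := by
        rw [hX, hGlast]; ring
      rw [show (Ideal.span (Set.range fun j : Fin (n+1) =>
          a j * ∏ i ∈ Finset.Iic j, a i ^ (Fin.snoc m k : Fin (n+1) → ℕ) i)) =
          Ideal.span (Set.range G) from rfl, key]
      exact Ideal.sub_mem _ h1 (Ideal.mul_mem_left _ _ h2)
    · intro h b
      set L := Localization (CLbd b) with hL
      rw [ih L]
      intro c
      have hsurj := fun i => IsLocalization.surj (M := CLbd b) (S := L) (c i)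
      choose p hp using hsurj
      set r : Fin n → R := fun i => (p i).1 with hr
      set s : Fin n → CLbd b := fun i => (p i).2 with hs
      set u : Fin n → Lˣ := fun i => (IsLocalization.map_units L (s i)).unit⁻¹ with hu
      have hce : c = fun i => ((u i : L) * algebraMap R L (r i)) := by
        funext i
        rw [hu, mul_comm]
        refine (Units.eq_mul_inv_iff_mul_eq _).mpr ?_
        rw [IsUnit.unit_spec]
        exact hp i
      rw [hce]
      apply CL.unit_mul
      -- now prove the condition for the images of the `r i`
      obtain ⟨M, hM⟩ := h (Fin.snoc r b)
      set m : Fin n → ℕ := fun i => M (Fin.castSucc i) with hm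
      set k := M (Fin.last n) with hk
      set X := ∏ i : Fin n, r i ^ m i with hX
      set g : Fin n → R := fun j => r j * ∏ i ∈ Finset.Iic j, r i ^ m i with hg
      set v := b * (X * b ^ k) with hv
      have hGen : (fun j : Fin (n+1) => (Fin.snoc r b : Fin (n+1) → R) j *
          ∏ i ∈ Finset.Iic j, (Fin.snoc r b : Fin (n+1) → R) i ^ M i)
          = Fin.snoc g v := by
        funext j
        refine Fin.lastCases ?_ ?_ j
        · rw [Fin.snoc_last, Fin.snoc_last, CL.Iic_last, hv, hX]
          congr 1
          rw [Fin.prod_univ_castSucc, Fin.snoc_last, ← hk]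
          congr 1
          refine Finset.prod_congr rfl fun i _ => ?_
          rw [Fin.snoc_castSucc, hm]
        · intro j
          rw [Fin.snoc_castSucc, Fin.snoc_castSucc, CL.prod_Iic_castSucc, hg]
          congr 1
          refine Finset.prod_congr rfl fun i _ => ?_
          rw [Fin.snoc_castSucc, hm]
      have hProd : (∏ i : Fin (n+1), (Fin.snoc r b : Fin (n+1) → R) i ^ M i) = X * b ^ k := by
        rw [Fin.prod_univ_castSucc, Fin.snoc_last, hX, ← hk]
        congr 1
        refine Finset.prod_congr rfl fun i _ => ?_
        rw [Fin.snoc_castSucc, hm]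
      rw [hGen, hProd, CL.range_snoc, Ideal.span_insert] at hM
      obtain ⟨y, hy, z, hz, hyz⟩ := Submodule.mem_sup.mp hM
      obtain ⟨t, rfl⟩ := Ideal.mem_span_singleton'.mp hy
      have hs0 : (b ^ k * (1 + b * (-t))) * X ∈ Ideal.span (Set.range g) := by
        have : (b ^ k * (1 + b * (-t))) * X = X * b ^ k - t * v := by rw [hv]; ring
        rw [this, ← hyz]
        simpa using hz
      refine ⟨m, ?_⟩
      have hmap : (Ideal.span (Set.range fun j : Fin n => algebraMap R L (r j) *
          ∏ i ∈ Finset.Iic j, algebraMap R L (r i) ^ m i))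
          = (Ideal.span (Set.range g)).map (algebraMap R L) := by
        rw [Ideal.map_span, ← Set.range_comp]
        congr 1
        funext j
        simp [hg, Function.comp_def, map_mul, map_prod, map_pow]
      have e1 : (∏ i : Fin n, algebraMap R L (r i) ^ m i) = algebraMap R L X := by
        rw [hX, map_prod]; simp [map_pow]
      rw [hmap, e1, CL.algebraMap_mem_map_iff]
      exact ⟨b ^ k * (1 + b * (-t)), ⟨k, -t, rfl⟩, hs0⟩

end Main



/-- **Coquand–Lombardi characterization of Krull dimension.**
For a commutative ring `R` and `n : ℕ`, we have `dim R < n` iff for all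
`a₁, …, aₙ ∈ R` there are exponents `m₁, …, mₙ` such that
`∏ i, aᵢ^{mᵢ}` lies in the ideal generated by the `a_j * ∏_{i ≤ j} aᵢ^{mᵢ}`. -/
theorem ringKrullDim_lt_iff_coquand_lombardi {R : Type*} [CommRing R] (n : ℕ) :
    ringKrullDim R < n ↔
      ∀ a : Fin n → R, ∃ m : Fin n → ℕ,
        (∏ i, a i ^ m i) ∈
          Ideal.span (Set.range fun j : Fin n => a j * ∏ i ∈ Finset.Iic j, a i ^ m i) := by
  exact CL.main n R
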